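/- Let X be a metric space and let ℋ(X) be a nonempty subset of K(X) each of whose elements is zero-dimensional, viewed as a subspace of CL(X). Suppose f : [0,1] → ℋ(X) is a path and that for each x ∈ f(0) there is a path g_x : [0,1] → X with g_x(0) = x and g_x(t) ∈ f(t) for every t ∈ [0,1]. Then the family {g_x[[0,1]] : x ∈ f(0)} has property S uniformly. -/
import Mathlib


open Set Topology

/-- The hyperspace of nonempty closed subsets of a topological space `X`. -/
structure CL (X : Type*) [TopologicalSpace X] : Type _ where
  carrier : Set X
  isClosed' : IsClosed carrier
  nonempty' : carrier.Nonempty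

/-- The basic Vietoris set `⟨𝒰⟩` determined by a finite family `𝒰` of subsets of `X`:
all nonempty closed sets contained in `⋃ 𝒰` and meeting every member of `𝒰`. -/
def CL.box {X : Type*} [TopologicalSpace X] (𝒰 : Finset (Set X)) : Set (CL X) :=
  {A | A.carrier ⊆ ⋃₀ (𝒰 : Set (Set X)) ∧ ∀ U ∈ 𝒰, (A.carrier ∩ U).Nonempty}

/-- The Vietoris topology on `CL X`, generated by the sets `⟨𝒰⟩` where `𝒰` ranges over
finite families of open subsets of `X`. -/
instance CL.instTopologicalSpace (X : Type*) [TopologicalSpace X] :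
    TopologicalSpace (CL X) :=
  TopologicalSpace.generateFrom
    {s | ∃ 𝒰 : Finset (Set X), (∀ U ∈ 𝒰, IsOpen U) ∧ s = CL.box 𝒰}

/-- `p` is the limit of the set `S`: `p ∈ S` and `S \ U` is finite for every open
set `U` containing `p`. -/
def IsLimitOf {X : Type*} [TopologicalSpace X] (S : Set X) (p : X) : Prop :=
  p ∈ S ∧ ∀ U : Set X, IsOpen U → p ∈ U → (S \ U).Finite

/-- `S` is a nontrivial convergent sequence in `X`: a countably infinite set having
a limit point belonging to it. -/
def IsNontrivialConvergentSeq {X : Type*} [TopologicalSpace X] (S : Set X) : Prop :=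
  S.Countable ∧ S.Infinite ∧ ∃ p, IsLimitOf S p

/-- The hyperspace `S_c(X)` of nontrivial convergent sequences in `X`, as a subset
of `CL X` (with the subspace Vietoris topology). -/
def Sc (X : Type*) [TopologicalSpace X] : Set (CL X) :=
  {A | IsNontrivialConvergentSeq A.carrier}

/-- The family `C(X)` of nonempty compact connected subsets of a metric space `X`. -/
def compactConnectedSets (X : Type*) [MetricSpace X] : Set (Set X) :=
  {A | IsCompact A ∧ IsConnected A}

/-- For `ε > 0`, membership in `C_ε(X)`: a nonempty compact connected set of
diameter `< ε`. -/
def MemCEps {X : Type*} [MetricSpace X] (ε : ℝ) (B : Set X) : Prop :=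
  IsCompact B ∧ IsConnected B ∧ Metric.diam B < ε

/-- A family `𝒜` of subsets of a metric space `X` has *property S uniformly* (PSU):
for every `ε > 0` there exists `k ∈ ℕ` such that every `A ∈ 𝒜` is the union of a
family of at most `k` members of `C_ε(X)`. -/
def HasPSU {X : Type*} [MetricSpace X] (𝒜 : Set (Set X)) : Prop :=
  ∀ ε : ℝ, 0 < ε → ∃ k : ℕ, ∀ A ∈ 𝒜, ∃ ℬ : Finset (Set X), ℬ.card ≤ k ∧
    (∀ B ∈ ℬ, MemCEps ε B) ∧ A = ⋃₀ (ℬ : Set (Set X))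

/-- Let `X` be a metric space and `ℋ(X)` a nonempty subset of `K(X)` (compact elements
of `CL X`) each of whose elements is zero-dimensional.  Suppose `f : [0,1] → ℋ(X)` is
a path and for each `x ∈ f 0` there is a path `g x : [0,1] → X` with `g x 0 = x` and
`g x t ∈ f t` for all `t`.  Then the family `{(g x)[[0,1]] : x ∈ f 0}` has property S
uniformly. -/

lemma key_zd {X : Type*} [MetricSpace X] {A : Set X} (hA : IsCompact A)
    (hzd : ∀ (y : A) (U : Set A), IsOpen U → y ∈ U →
      ∃ V : Set A, IsClopen V ∧ y ∈ V ∧ V ⊆ U)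
    {ε : ℝ} (hε : 0 < ε) :
    ∃ 𝒱 : Finset (Set X), (∀ V ∈ 𝒱, IsOpen V) ∧
      (∀ V ∈ 𝒱, ∀ a ∈ V, ∀ b ∈ V, dist a b ≤ ε) ∧
      (∀ V ∈ 𝒱, ∀ V' ∈ 𝒱, V ≠ V' → Disjoint V V') ∧
      A ⊆ ⋃₀ (𝒱 : Set (Set X)) := by
  classical
  haveI : CompactSpace A := isCompact_iff_compactSpace.mp hA
  -- clopen neighborhoods inside small balls
  have h1 : ∀ y : A, ∃ V : Set A, IsClopen V ∧ y ∈ V ∧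
      V ⊆ (Subtype.val ⁻¹' Metric.ball (y : X) (ε/8)) := by
    intro y
    exact hzd y _ (continuous_subtype_val.isOpen_preimage _ Metric.isOpen_ball)
      (by simp [Metric.mem_ball, hε, div_pos])
  choose V hVclopen hVmem hVball using h1
  -- finite subcover
  obtain ⟨T, hT⟩ := isCompact_univ.elim_finite_subcover V (fun y => (hVclopen y).2)
    (fun y _ => mem_iUnion.2 ⟨y, hVmem y⟩)
  -- cells
  set W : Finset A → Set A := fun S =>
    (⋂ z ∈ S, V z) ∩ (⋂ z ∈ T \ S, (V z)ᶜ) with hW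
  have hWclopen : ∀ S, IsClopen (W S) := by
    intro S
    refine IsClopen.inter ?_ ?_
    · exact isClopen_biInter_finset (fun z _ => hVclopen z)
    · exact isClopen_biInter_finset (fun z _ => (hVclopen z).compl)
  have hWcover : ∀ p : A, p ∈ W (T.filter (fun z => p ∈ V z)) := by
    intro p
    constructor
    · exact mem_iInter₂.2 fun z hz => (Finset.mem_filter.1 hz).2
    · exact mem_iInter₂.2 fun z hz => by
        have := Finset.mem_sdiff.1 hz
        exact fun hp => this.2 (Finset.mem_filter.2 ⟨this.1, hp⟩)
  have hWdisj : ∀ S S', S ∈ T.powerset → S' ∈ T.powerset → S ≠ S' →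
      Disjoint (W S) (W S') := by
    intro S S' hS hS' hne
    rw [Set.disjoint_left]
    rintro p ⟨hp1, hp2⟩ ⟨hq1, hq2⟩
    have : ∃ z, z ∈ T ∧ ((z ∈ S ∧ z ∉ S') ∨ (z ∈ S' ∧ z ∉ S)) := by
      by_contra hcon
      refine hne (Finset.ext fun z => ⟨fun hz => ?_, fun hz => ?_⟩)
      · by_contra hz'
        exact hcon ⟨z, (Finset.mem_powerset.1 hS) hz, Or.inl ⟨hz, hz'⟩⟩
      · by_contra hz'
        exact hcon ⟨z, (Finset.mem_powerset.1 hS') hz, Or.inr ⟨hz, hz'⟩⟩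
    obtain ⟨z, hzT, hz⟩ := this
    rcases hz with ⟨h1, h2⟩ | ⟨h1, h2⟩
    · exact (mem_iInter₂.1 hq2 z (Finset.mem_sdiff.2 ⟨hzT, h2⟩))
        (mem_iInter₂.1 hp1 z h1)
    · exact (mem_iInter₂.1 hp2 z (Finset.mem_sdiff.2 ⟨hzT, h2⟩))
        (mem_iInter₂.1 hq1 z h1)
  have hWsmall : ∀ S, (W S).Nonempty → ∃ z, W S ⊆ V z := by
    rintro S ⟨p, hp⟩
    have : p ∈ ⋃ z ∈ T, V z := hT (mem_univ p)
    obtain ⟨z, hzT, hzp⟩ := mem_iUnion₂.1 this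
    refine ⟨z, ?_⟩
    by_cases hzS : z ∈ S
    · intro q hq; exact mem_iInter₂.1 hq.1 z hzS
    · exact absurd hzp (mem_iInter₂.1 hp.2 z (Finset.mem_sdiff.2 ⟨hzT, hzS⟩))
  -- push to X
  set C : Finset A → Set X := fun S => Subtype.val '' W S with hC
  have hCcompact : ∀ S, IsCompact (C S) :=
    fun S => ((hWclopen S).1.isCompact).image continuous_subtype_val
  have hCdisj : ∀ S S', S ∈ T.powerset → S' ∈ T.powerset → S ≠ S' →
      Disjoint (C S) (C S') := by
    intro S S' hS hS' hne
    exact Set.disjoint_image_of_injective Subtype.val_injective (hWdisj S S' hS hS' hne)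
  have hCsmall : ∀ S, ∀ a ∈ C S, ∀ b ∈ C S, dist a b ≤ ε/4 := by
    intro S a ha b hb
    obtain ⟨z, hz⟩ := hWsmall S ⟨_, ((Set.mem_image _ _ _).1 ha).choose_spec.1⟩
    obtain ⟨a', ha', rfl⟩ := ha
    obtain ⟨b', hb', rfl⟩ := hb
    have h1 : dist (a' : X) z < ε/8 := hVball z (hz ha')
    have h2 : dist (b' : X) z < ε/8 := hVball z (hz hb')
    calc dist (a' : X) (b' : X) ≤ dist (a' : X) z + dist (b' : X) z := dist_triangle_right _ _ _
    _ ≤ ε/8 + ε/8 := by linarith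
    _ = ε/4 := by ring
  -- choose δ for thickenings
  have hpair : ∀ p : Finset A × Finset A,
      ∃ δ : ℝ, 0 < δ ∧ (p.1 ∈ T.powerset → p.2 ∈ T.powerset → p.1 ≠ p.2 →
        Disjoint (Metric.thickening δ (C p.1)) (Metric.thickening δ (C p.2))) := by
    rintro ⟨S, S'⟩
    by_cases h : S ∈ T.powerset ∧ S' ∈ T.powerset ∧ S ≠ S'
    · obtain ⟨δ, hδ, hd⟩ := (hCdisj S S' h.1 h.2.1 h.2.2).exists_thickenings
        (hCcompact S) (hCcompact S').isClosed
      exact ⟨δ, hδ, fun _ _ _ => hd⟩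
    · refine ⟨1, one_pos, fun h1 h2 h3 => absurd ⟨h1, h2, h3⟩ h⟩
  choose d hd0 hdd using hpair
  set P : Finset (Finset A × Finset A) := T.powerset ×ˢ T.powerset with hP
  set D : Finset ℝ := insert (ε/8) (P.image d) with hD
  have hDne : D.Nonempty := Finset.insert_nonempty _ _
  set δ : ℝ := D.min' hDne with hδdef
  have hδpos : 0 < δ := by
    rw [hδdef, Finset.lt_min'_iff]
    intro b hb
    rcases Finset.mem_insert.1 hb with rfl | hb
    · linarith
    · obtain ⟨p, _, rfl⟩ := Finset.mem_image.1 hb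
      exact hd0 p
  have hδε : δ ≤ ε/8 := Finset.min'_le _ _ (Finset.mem_insert_self _ _)
  have hδd : ∀ p ∈ P, δ ≤ d p := fun p hp =>
    Finset.min'_le _ _ (Finset.mem_insert_of_mem (Finset.mem_image_of_mem d hp))
  refine ⟨T.powerset.image (fun S => Metric.thickening δ (C S)), ?_, ?_, ?_, ?_⟩
  · rintro V hV
    obtain ⟨S, _, rfl⟩ := Finset.mem_image.1 hV
    exact Metric.isOpen_thickening
  · rintro V hV a ha b hb
    obtain ⟨S, _, rfl⟩ := Finset.mem_image.1 hV
    obtain ⟨a', ha'C, ha'd⟩ := Metric.mem_thickening_iff.1 ha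
    obtain ⟨b', hb'C, hb'd⟩ := Metric.mem_thickening_iff.1 hb
    have := hCsmall S a' ha'C b' hb'C
    calc dist a b ≤ dist a a' + dist a' b' + dist b' b := dist_triangle4 _ _ _ _
    _ ≤ ε/8 + ε/4 + ε/8 := by
        have := dist_comm b b' ▸ hb'd
        have h3 : dist b' b < ε/8 := by rw [dist_comm]; linarith
        linarith
    _ ≤ ε := by linarith
  · rintro V hV V' hV' hne
    obtain ⟨S, hS, rfl⟩ := Finset.mem_image.1 hV
    obtain ⟨S', hS', rfl⟩ := Finset.mem_image.1 hV'
    have hSS' : S ≠ S' := by rintro rfl; exact hne rfl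
    have hmem : (S, S') ∈ P := Finset.mem_product.2 ⟨hS, hS'⟩
    exact Disjoint.mono (Metric.thickening_mono (hδd _ hmem) _)
      (Metric.thickening_mono (hδd _ hmem) _) (hdd (S, S') hS hS' hSS')
  · intro a ha
    refine Set.mem_sUnion.2 ⟨Metric.thickening δ (C (T.filter (fun z => (⟨a, ha⟩ : A) ∈ V z))), ?_, ?_⟩
    · exact Finset.mem_coe.2 (Finset.mem_image_of_mem _ (Finset.mem_powerset.2 (Finset.filter_subset _ _)))
    · exact Metric.self_subset_thickening hδpos _ ⟨⟨a, ha⟩, hWcover ⟨a, ha⟩, rfl⟩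

lemma CL.isOpen_sub {X : Type*} [TopologicalSpace X] {W : Set X} (hW : IsOpen W) :
    IsOpen {A : CL X | A.carrier ⊆ W} := by
  have he : {A : CL X | A.carrier ⊆ W} = CL.box {W} := by
    ext A
    simp only [CL.box, mem_setOf_eq, Finset.coe_singleton, sUnion_singleton,
      Finset.mem_singleton]
    constructor
    · intro h
      refine ⟨h, fun U hU => ?_⟩
      subst hU
      obtain ⟨a, ha⟩ := A.nonempty'
      exact ⟨a, ha, h ha⟩
    · exact fun h => h.1
  rw [he]
  exact TopologicalSpace.isOpen_generateFrom_of_mem ⟨{W}, by simp [hW], rfl⟩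


lemma interval_split {n : ℕ} {s : ℝ} (hs : s ∈ Icc (0:ℝ) 1) :
    ∃ i : ℕ, i ≤ n ∧ s ∈ Icc ((i:ℝ)/(n+1)) ((i+1)/(n+1)) := by
  have hNpos : (0:ℝ) < (n:ℝ) + 1 := by positivity
  by_cases hcase : ⌊s * ((n:ℝ)+1)⌋₊ ≤ n
  · refine ⟨⌊s * ((n:ℝ)+1)⌋₊, hcase, ?_, ?_⟩
    · rw [div_le_iff₀ hNpos]
      exact Nat.floor_le (mul_nonneg hs.1 hNpos.le)
    · rw [le_div_iff₀ hNpos]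
      exact_mod_cast (Nat.lt_floor_add_one (s * ((n:ℝ)+1))).le
  · push_neg at hcase
    have h1 : ((n:ℝ) + 1) ≤ s * ((n:ℝ)+1) := by
      have h2 : n + 1 ≤ ⌊s * ((n:ℝ)+1)⌋₊ := hcase
      calc ((n:ℝ) + 1) = ((n + 1 : ℕ) : ℝ) := by push_cast; ring
      _ ≤ (⌊s * ((n:ℝ)+1)⌋₊ : ℝ) := by exact_mod_cast h2
      _ ≤ s * ((n:ℝ)+1) := Nat.floor_le (by nlinarith [hs.1])
    have hs1 : 1 ≤ s := by nlinarith
    have hseq : s = 1 := le_antisymm hs.2 hs1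
    refine ⟨n, le_refl n, ?_, ?_⟩
    · rw [div_le_iff₀ hNpos, hseq]; nlinarith
    · rw [le_div_iff₀ hNpos, hseq]; nlinarith

theorem stmt_6 {X : Type*} [MetricSpace X] (ℋ : Set (CL X)) (hne : ℋ.Nonempty)
    (hK : ∀ A ∈ ℋ, IsCompact A.carrier)
    (hzd : ∀ A ∈ ℋ, ∀ (y : A.carrier) (U : Set A.carrier), IsOpen U → y ∈ U →
      ∃ V : Set A.carrier, IsClopen V ∧ y ∈ V ∧ V ⊆ U)
    (f : C(unitInterval, CL X)) (hf : ∀ t, f t ∈ ℋ)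
    (g : X → C(unitInterval, X))
    (hg0 : ∀ x ∈ (f 0).carrier, g x 0 = x)
    (hgmem : ∀ x ∈ (f 0).carrier, ∀ t, g x t ∈ (f t).carrier) :
    HasPSU {S | ∃ x ∈ (f 0).carrier, S = Set.range (g x)} := by
  classical
  intro ε hε
  have hT : ∀ t : unitInterval, ∃ 𝒱 : Finset (Set X), (∀ V ∈ 𝒱, IsOpen V) ∧
      (∀ V ∈ 𝒱, ∀ a ∈ V, ∀ b ∈ V, dist a b ≤ ε/2) ∧
      (∀ V ∈ 𝒱, ∀ V' ∈ 𝒱, V ≠ V' → Disjoint V V') ∧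
      (f t).carrier ⊆ ⋃₀ (𝒱 : Set (Set X)) :=
    fun t => key_zd (hK _ (hf t)) (hzd _ (hf t)) (by linarith)
  choose 𝒱 h𝒱open h𝒱small h𝒱disj h𝒱cov using hT
  set φ : ℝ → unitInterval := fun r => Set.projIcc 0 1 zero_le_one r with hφ
  have hφc : Continuous φ := continuous_projIcc
  have hopen : ∀ t : unitInterval,
      IsOpen (φ ⁻¹' (f ⁻¹' {A : CL X | A.carrier ⊆ ⋃₀ (𝒱 t : Set (Set X))})) := by
    intro t
    apply hφc.isOpen_preimage
    apply f.continuous.isOpen_preimage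
    exact CL.isOpen_sub (isOpen_sUnion fun V hV => h𝒱open t V hV)
  have hcov : Icc (0:ℝ) 1 ⊆
      ⋃ t : unitInterval, φ ⁻¹' (f ⁻¹' {A : CL X | A.carrier ⊆ ⋃₀ (𝒱 t : Set (Set X))}) :=
    fun r _ => mem_iUnion.2 ⟨φ r, h𝒱cov (φ r)⟩
  obtain ⟨δ, hδ, hball⟩ := lebesgue_number_lemma_of_metric isCompact_Icc hopen hcov
  obtain ⟨n, hn⟩ := exists_nat_one_div_lt hδ
  have hNpos : (0:ℝ) < (n:ℝ) + 1 := by positivity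
  refine ⟨n + 1, ?_⟩
  rintro A ⟨x, hx, rfl⟩
  set ψ : ℝ → X := fun r => g x (φ r) with hψ
  have hψc : Continuous ψ := (g x).continuous.comp hφc
  set J : ℕ → Set ℝ := fun i => Icc ((i:ℝ)/((n:ℝ)+1)) (((i:ℝ)+1)/((n:ℝ)+1)) with hJ
  have hJle : ∀ i : ℕ, (i:ℝ)/((n:ℝ)+1) ≤ ((i:ℝ)+1)/((n:ℝ)+1) := by
    intro i
    gcongr
    linarith
  have piece : ∀ i : ℕ, i ≤ n → MemCEps ε (ψ '' J i) := by
    intro i hi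
    have hmemIcc : (i:ℝ)/((n:ℝ)+1) ∈ Icc (0:ℝ) 1 := by
      constructor
      · positivity
      · rw [div_le_one hNpos]
        have : (i:ℝ) ≤ n := by exact_mod_cast hi
        linarith
    obtain ⟨τ, hτ⟩ := hball _ hmemIcc
    have hsubball : J i ⊆ Metric.ball ((i:ℝ)/((n:ℝ)+1)) δ := by
      intro s hs
      obtain ⟨hs1, hs2⟩ := hs
      rw [Metric.mem_ball, Real.dist_eq, abs_of_nonneg (by linarith)]
      have heq : ((i:ℝ)+1)/((n:ℝ)+1) = (i:ℝ)/((n:ℝ)+1) + 1/((n:ℝ)+1) := by ring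
      rw [heq] at hs2
      linarith
    have himg : ψ '' J i ⊆ ⋃₀ ((𝒱 τ : Set (Set X))) := by
      rintro _ ⟨s, hs, rfl⟩
      exact hτ (hsubball hs) (hgmem x hx (φ s))
    have hJne : ((i:ℝ)/((n:ℝ)+1)) ∈ J i := ⟨le_refl _, hJle i⟩
    obtain ⟨V₀, hV₀, hpV₀⟩ := himg ⟨_, hJne, rfl⟩
    have hV₀' : V₀ ∈ 𝒱 τ := hV₀
    have hpre : IsPreconnected (ψ '' J i) := (isPreconnected_Icc).image ψ hψc.continuousOn
    have hsubV : ψ '' J i ⊆ V₀ := by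
      set v : Set X := ⋃₀ ((𝒱 τ : Set (Set X)) \ {V₀}) with hv
      have hvopen : IsOpen v := isOpen_sUnion fun V hV => h𝒱open τ V hV.1
      have hdisj : Disjoint V₀ v := by
        rw [hv, Set.disjoint_sUnion_right]
        rintro V ⟨hV1, hV2⟩
        exact h𝒱disj τ V₀ hV₀' V hV1 (fun h => hV2 (Set.mem_singleton_iff.2 h.symm))
      have huv : ψ '' J i ⊆ V₀ ∪ v := by
        intro q hq
        obtain ⟨V, hV, hqV⟩ := himg hq
        by_cases hVV : V = V₀
        · exact Or.inl (hVV ▸ hqV)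
        · exact Or.inr ⟨V, ⟨hV, hVV⟩, hqV⟩
      exact hpre.subset_left_of_subset_union (h𝒱open τ V₀ hV₀') hvopen hdisj huv
        ⟨ψ ((i:ℝ)/((n:ℝ)+1)), ⟨_, hJne, rfl⟩, hpV₀⟩
    refine ⟨(isCompact_Icc).image hψc, ⟨(Set.nonempty_Icc.2 (hJle i)).image ψ, hpre⟩, ?_⟩
    have hd : Metric.diam (ψ '' J i) ≤ ε/2 :=
      Metric.diam_le_of_forall_dist_le (by linarith)
        (fun a ha b hb => h𝒱small τ V₀ hV₀' a (hsubV ha) b (hsubV hb))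
    linarith
  refine ⟨(Finset.range (n+1)).image (fun i => ψ '' J i), ?_, ?_, ?_⟩
  · exact le_trans Finset.card_image_le (le_of_eq (Finset.card_range _))
  · intro B hB
    obtain ⟨i, hi, rfl⟩ := Finset.mem_image.1 hB
    exact piece i (Nat.lt_succ_iff.1 (Finset.mem_range.1 hi))
  · ext p
    simp only [Finset.coe_image, Finset.coe_range, Set.sUnion_image, Set.mem_iUnion,
      Set.mem_range, Set.mem_Iio]
    constructor
    · rintro ⟨u, rfl⟩
      obtain ⟨i, hi, hmem⟩ := interval_split (n := n) (s := (u:ℝ)) u.2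
      refine ⟨i, Nat.lt_succ_of_le hi, ⟨(u:ℝ), hmem, ?_⟩⟩
      show ψ (u:ℝ) = g x u
      simp only [hψ, hφ]
      rw [Set.projIcc_val]
    · rintro ⟨i, hi, ⟨s, hs, rfl⟩⟩
      exact ⟨φ s, rfl⟩
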